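/- For the reduced cubic polynomial s^3 + ((1 + n κa)/ς) s^2 + (n κv/ς) s + (n κp/ς) with ς > 0 and n > 0, all roots have negative real part if and only if κa > -1/n, κp > 0, and κv > ς κp / (1 + n κa). -/

import Mathlib

lemma platoon_real_root_cubic (A B C : ℝ) : ∃ r : ℝ, r^3 + A*r^2 + B*r + C = 0 := by
  set M : ℝ := 1 + |A| + |B| + |C| with hM
  have hM1 : 1 ≤ M := by
    have := abs_nonneg A; have := abs_nonneg B; have := abs_nonneg C
    simp only [hM]; linarith
  have hAle := le_abs_self A; have hBle := le_abs_self B; have hCle := le_abs_self C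
  have hAge := neg_abs_le A; have hBge := neg_abs_le B; have hCge := neg_abs_le C
  set f : ℝ → ℝ := fun x => x^3 + A*x^2 + B*x + C with hf
  have hcont : ContinuousOn f (Set.Icc (-M) M) := by fun_prop
  have h1 : f (-M) ≤ 0 := by
    simp only [hf]
    nlinarith [sq_nonneg M, sq_nonneg (M-1), mul_le_mul_of_nonneg_right hAle (sq_nonneg M)]
  have h2 : 0 ≤ f M := by
    simp only [hf]
    nlinarith [sq_nonneg M, sq_nonneg (M-1), mul_le_mul_of_nonneg_right hAge (sq_nonneg M)]
  obtain ⟨r, _, hr⟩ := intermediate_value_Icc (by linarith : (-M : ℝ) ≤ M) hcont ⟨h1, h2⟩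
  exact ⟨r, hr⟩

/-- Routh–Hurwitz criterion for a monic real cubic. -/
lemma platoon_cubic_hurwitz (A B C : ℝ) :
    (∀ z : ℂ, z^3 + (A:ℂ)*z^2 + (B:ℂ)*z + (C:ℂ) = 0 → z.re < 0) ↔
    (0 < A ∧ 0 < C ∧ C < A*B) := by
  constructor
  · intro h
    obtain ⟨r, hr⟩ := platoon_real_root_cubic A B C
    have hrC : ((r:ℂ))^3 + (A:ℂ)*(r:ℂ)^2 + (B:ℂ)*(r:ℂ) + (C:ℂ) = 0 := by
      exact_mod_cast congrArg (Complex.ofReal) hr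
    have hrneg : r < 0 := by simpa using h r hrC
    set p : ℝ := A + r with hp
    set q : ℝ := B + A*r + r^2 with hq
    have hfact : ∀ z : ℂ, z^3 + (A:ℂ)*z^2 + (B:ℂ)*z + (C:ℂ) = (z - r) * (z^2 + (p:ℝ)*z + (q:ℝ)) := by
      intro z
      push_cast [hp, hq]
      linear_combination hrC
    have hquad : ∀ w : ℂ, w^2 + (p:ℂ)*w + (q:ℂ) = 0 → w.re < 0 := by
      intro w hw
      apply h w
      rw [hfact w, hw, mul_zero]
    have hpq : 0 < p ∧ 0 < q := by
      rcases le_or_gt 0 (p^2 - 4*q) with hD | hD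
      · set s := Real.sqrt (p^2 - 4*q) with hs
        have hs2 : s^2 = p^2 - 4*q := Real.sq_sqrt hD
        have hsnn : 0 ≤ s := Real.sqrt_nonneg _
        have hsC : ((s:ℂ))^2 = (p:ℂ)^2 - 4*(q:ℂ) := by
          exact_mod_cast congrArg (Complex.ofReal) hs2
        have hw1 : ((((-p+s)/2 : ℝ)):ℂ)^2 + (p:ℂ)*(((-p+s)/2 : ℝ):ℂ) + (q:ℂ) = 0 := by
          push_cast
          linear_combination (1/4 : ℂ) * hsC
        have hw2 : ((((-p-s)/2 : ℝ)):ℂ)^2 + (p:ℂ)*(((-p-s)/2 : ℝ):ℂ) + (q:ℂ) = 0 := by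
          push_cast
          linear_combination (1/4 : ℂ) * hsC
        have h1 : (-p+s)/2 < 0 := by simpa using hquad _ hw1
        have h2 : (-p-s)/2 < 0 := by simpa using hquad _ hw2
        exact ⟨by linarith, by nlinarith [hs2]⟩
      · set s := Real.sqrt (4*q - p^2) with hs
        have hs2 : s^2 = 4*q - p^2 := Real.sq_sqrt (by linarith)
        set w : ℂ := (-(p:ℂ) + (s:ℂ)*Complex.I)/2 with hw
        have hwroot : w^2 + (p:ℂ)*w + (q:ℂ) = 0 := by
          have hsC : ((s:ℂ))^2 = 4*(q:ℂ) - (p:ℂ)^2 := by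
            exact_mod_cast congrArg (Complex.ofReal) hs2
          rw [hw]
          have hI : (Complex.I)^2 = -1 := Complex.I_sq
          linear_combination (-(1:ℂ)/4) * hsC + ((s:ℂ)^2/4) * hI
        have hwre : w.re = -p/2 := by
          simp [hw, Complex.div_re]
        have := hquad w hwroot
        rw [hwre] at this
        exact ⟨by linarith, by nlinarith [sq_nonneg p]⟩
    obtain ⟨hppos, hqpos⟩ := hpq
    have hCq : C = -r * q := by simp only [hq]; nlinarith [hr]
    refine ⟨by simp only [hp] at hppos; linarith, by nlinarith, ?_⟩
    have hBq : B = q - r*p := by simp only [hq, hp]; ring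
    have hAq : A = p - r := by simp only [hp]; ring
    rw [hAq, hBq, hCq]
    nlinarith [mul_pos hppos hqpos, mul_pos (mul_pos hppos hppos) (neg_pos.mpr hrneg),
      mul_nonneg hppos.le (sq_nonneg r)]
  · rintro ⟨hA, hC, hABC⟩
    have hB : 0 < B := by nlinarith
    intro z hz
    set x := z.re with hx
    set y := z.im with hy
    have hzxy : z = Complex.mk x y := by simp [hx, hy]
    rw [hzxy] at hz
    have hre := congrArg Complex.re hz
    have him := congrArg Complex.im hz
    simp [Complex.ext_iff, pow_succ, Complex.mul_re, Complex.mul_im] at hre him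
    by_contra hcon
    push_neg at hcon
    rcases eq_or_ne y 0 with hy0 | hy0
    · rw [hy0] at hre
      nlinarith [mul_nonneg (mul_nonneg hcon hcon) hcon,
        mul_nonneg hA.le (mul_nonneg hcon hcon), mul_nonneg hB.le hcon]
    · have him2 : y^2 = 3*x^2 + 2*A*x + B := by
        have h : y * (3*x^2 - y^2 + 2*A*x + B) = 0 := by nlinarith [him]
        rcases mul_eq_zero.mp h with h | h
        · exact absurd h hy0
        · linarith
      have key : 8*x^3 + 8*A*x^2 + 2*(A^2+B)*x + (A*B - C) = 0 := by nlinarith [hre, him2]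
      nlinarith [mul_nonneg (mul_nonneg hcon hcon) hcon,
        mul_nonneg hA.le (mul_nonneg hcon hcon),
        mul_nonneg (mul_nonneg hA.le hA.le) hcon, mul_nonneg hB.le hcon]

/-- Stability of the reduced cubic characteristic polynomial (integral gain `κs = 0`). -/
theorem platoon_cubic_stability (ς n κp κv κa : ℝ) (hς : ς > 0) (hn : n > 0) :
    (∀ z : ℂ, z ^ 3 + (((1 + n * κa) / ς : ℝ) : ℂ) * z ^ 2 + ((n * κv / ς : ℝ) : ℂ) * z +
        ((n * κp / ς : ℝ) : ℂ) = 0 → z.re < 0) ↔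
    (κa > -1 / n ∧ κp > 0 ∧ κv > ς * κp / (1 + n * κa)) := by
  rw [platoon_cubic_hurwitz ((1 + n * κa) / ς) (n * κv / ς) (n * κp / ς)]
  constructor
  · rintro ⟨h1, h2, h3⟩
    have ha : 0 < 1 + n * κa := by
      rcases div_pos_iff.mp h1 with ⟨h,_⟩|⟨_,h⟩
      · exact h
      · linarith
    have hp : 0 < κp := by
      rcases div_pos_iff.mp h2 with ⟨h,_⟩|⟨_,h⟩
      · nlinarith
      · linarith
    refine ⟨?_, hp, ?_⟩
    · rw [gt_iff_lt, div_lt_iff₀ hn]; nlinarith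
    · rw [gt_iff_lt, div_lt_iff₀ ha]
      rw [div_mul_div_comm, div_lt_div_iff₀ hς (by positivity)] at h3
      have h4 : (n*κp*ς)*ς < ((1+n*κa)*(n*κv))*ς := by nlinarith
      have h5 := (mul_lt_mul_iff_left₀ hς).mp h4
      have h6 : n*(ς*κp) < n*(κv*(1+n*κa)) := by nlinarith
      exact (mul_lt_mul_iff_right₀ hn).mp h6
  · rintro ⟨h1, h2, h3⟩
    have ha : 0 < 1 + n * κa := by
      rw [gt_iff_lt, div_lt_iff₀ hn] at h1; nlinarith
    have h3' : ς * κp < κv * (1 + n * κa) := (div_lt_iff₀ ha).mp h3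
    refine ⟨by positivity, by positivity, ?_⟩
    rw [div_mul_div_comm, div_lt_div_iff₀ hς (by positivity)]
    nlinarith [mul_pos hn hς, mul_pos (mul_pos hn hς) hς]
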